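/- Every Hausdorff locally compact ring topology on the ring I of finite-image endomorphisms is discrete. Equivalently, I does not admit a nondiscrete Hausdorff locally compact ring topology. -/

import Mathlib

/-- The (nonunital) ring of endomorphisms with finite image of the countable
elementary abelian `p`-group `ℕ →₀ ZMod p`. -/
def finRangeEndSubring (p : ℕ) : NonUnitalSubring (Module.End (ZMod p) (ℕ →₀ ZMod p)) where
  carrier := {α : Module.End (ZMod p) (ℕ →₀ ZMod p) | (Set.range α).Finite}
  zero_mem' := (Set.finite_singleton 0).subset (by rintro _ ⟨x, rfl⟩; simp)
  add_mem' {a b} ha hb := (Set.Finite.image2 (· + ·) ha hb).subset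
    (by rintro _ ⟨x, rfl⟩
        exact Set.mem_image2_of_mem ⟨x, rfl⟩ ⟨x, rfl⟩)
  neg_mem' {a} ha := (ha.image Neg.neg).subset
    (by rintro _ ⟨x, rfl⟩; exact ⟨a x, ⟨x, rfl⟩, rfl⟩)
  mul_mem' {a b} ha hb := ha.subset (by rintro _ ⟨x, rfl⟩; exact ⟨b x, rfl⟩)

variable {p : ℕ}

/-- Projection onto coordinates `≤ N`. -/
noncomputable def projE (p N : ℕ) : Module.End (ZMod p) (ℕ →₀ ZMod p) :=
  ∑ i ∈ Finset.range (N + 1), (Finsupp.lsingle i).comp (Finsupp.lapply i)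

lemma projE_apply (N : ℕ) (x : ℕ →₀ ZMod p) (m : ℕ) :
    (projE p N x) m = if m < N + 1 then x m else 0 := by
  simp [projE, Finsupp.single_apply, Finset.sum_apply', Finset.sum_ite_eq',
    Finset.mem_range]

lemma projE_mem [Fact p.Prime] (N : ℕ) : projE p N ∈ finRangeEndSubring p := by
  refine (Set.finite_range fun v : Fin (N + 1) → ZMod p =>
      ∑ i : Fin (N + 1), Finsupp.single (i : ℕ) (v i)).subset ?_
  rintro _ ⟨x, rfl⟩
  refine ⟨fun i => x i, ?_⟩
  show ∑ i : Fin (N + 1), Finsupp.single (i : ℕ) (x i) = projE p N x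
  rw [← Finset.sum_range fun i => Finsupp.single i (x i)]
  simp [projE]

lemma projE_fix (N : ℕ) {y : ℕ →₀ ZMod p} (h : ∀ m, N < m → y m = 0) :
    projE p N y = y := by
  ext m
  rw [projE_apply]
  split
  · rfl
  · exact (h m (by omega)).symm

lemma exists_projE_fix (z : Module.End (ZMod p) (ℕ →₀ ZMod p))
    (hz : (Set.range z).Finite) : ∃ N, projE p N * z = z := by
  refine ⟨hz.toFinset.sup fun y => y.support.sup id, LinearMap.ext fun x => ?_⟩
  rw [Module.End.mul_apply]
  refine projE_fix _ fun m hm => ?_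
  by_contra h
  have hmem : m ∈ (z x).support := Finsupp.mem_support_iff.2 h
  have : m ≤ hz.toFinset.sup fun y => y.support.sup id :=
    le_trans (Finset.le_sup (f := id) hmem)
      (Finset.le_sup (f := fun y : ℕ →₀ ZMod p => y.support.sup id)
        (hz.mem_toFinset.2 ⟨x, rfl⟩))
  omega

/-- The rank-one map `x ↦ single (N+1) (x m)`. -/
noncomputable def xO (p N m : ℕ) : Module.End (ZMod p) (ℕ →₀ ZMod p) :=
  (Finsupp.lsingle (N + 1)).comp (Finsupp.lapply m)

lemma xO_apply (N m : ℕ) (x : ℕ →₀ ZMod p) :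
    xO p N m x = Finsupp.single (N + 1) (x m) := rfl

lemma xO_mem [Fact p.Prime] (N m : ℕ) : xO p N m ∈ finRangeEndSubring p := by
  refine (Set.finite_range fun c : ZMod p => Finsupp.single (N + 1) c).subset ?_
  rintro _ ⟨x, rfl⟩
  exact ⟨x m, rfl⟩

lemma projE_single (N : ℕ) (c : ZMod p) :
    projE p N (Finsupp.single (N + 1) c) = 0 := by
  ext m
  rw [projE_apply]
  split
  · rw [Finsupp.single_apply]
    simp only [Finsupp.coe_zero, Pi.zero_apply]
    rw [if_neg (by omega)]
  · simp

theorem abstractKey {R : Type*} [NonUnitalNonAssocRing R] [TopologicalSpace R]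
    [IsTopologicalRing R] [T2Space R] [LocallyCompactSpace R]
    (E : ℕ → R) (X : ℕ → ℕ → R)
    (hcov : ∀ z : R, ∃ N, E N * z = z)
    (hker : ∀ N (z : R), E N * z = z →
      (∀ m, m < N + 1 → E N * (X N m * z) = X N m * z) → z = 0) :
    DiscreteTopology R := by
  let L : ℕ → AddSubgroup R := fun N =>
    { carrier := {z | E N * z = z}
      zero_mem' := mul_zero _
      add_mem' := fun {a b} ha hb => by
        simp only [Set.mem_setOf_eq] at *
        rw [mul_add, ha, hb]
      neg_mem' := fun {a} ha => by
        simp only [Set.mem_setOf_eq] at *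
        rw [mul_neg, ha] }
  have hLclosed : ∀ N, IsClosed (L N : Set R) := fun N =>
    isClosed_eq (continuous_mul_left (E N)) continuous_id
  have hcover : ⋃ N, (L N : Set R) = Set.univ :=
    Set.eq_univ_of_forall fun z => Set.mem_iUnion.2 (hcov z)
  obtain ⟨N, x, hx⟩ := nonempty_interior_of_iUnion_of_closed hLclosed hcover
  have hLopen : IsOpen (L N : Set R) :=
    AddSubgroup.isOpen_of_mem_nhds (L N) (mem_interior_iff_mem_nhds.1 hx)
  let D : ℕ → Set R := fun m => (fun z => X N m * z) ⁻¹' (L N : Set R)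
  have hDopen : ∀ m, IsOpen (D m) := fun m =>
    hLopen.preimage (continuous_mul_left (X N m))
  have hD0 : ∀ m, (0 : R) ∈ D m := fun m => by
    show X N m * 0 ∈ L N
    rw [mul_zero]
    exact (L N).zero_mem
  let U : Set R := (L N : Set R) ∩ ⋂ m ∈ Finset.range (N + 1), D m
  have hUopen : IsOpen U :=
    hLopen.inter (isOpen_biInter_finset fun m _ => hDopen m)
  have hU0 : (0 : R) ∈ U :=
    ⟨(L N).zero_mem, Set.mem_biInter fun m _ => hD0 m⟩
  have hUsub : U ⊆ {0} := by
    rintro z ⟨hz1, hz2⟩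
    exact hker N z hz1 fun m hm =>
      Set.mem_iInter₂.1 hz2 m (Finset.mem_range.2 hm)
  have hsing : IsOpen ({0} : Set R) := by
    rw [← subset_antisymm hUsub (Set.singleton_subset_iff.2 hU0)]
    exact hUopen
  exact discreteTopology_of_isOpen_singleton_zero hsing

lemma end_eq_zero {p : ℕ} (N : ℕ) (z : Module.End (ZMod p) (ℕ →₀ ZMod p))
    (hz1 : projE p N * z = z)
    (hz2 : ∀ m, m < N + 1 → projE p N * (xO p N m * z) = xO p N m * z) :
    z = 0 := by
  apply LinearMap.ext fun v => ?_
  apply Finsupp.ext fun m => ?_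
  rcases lt_or_ge m (N + 1) with hm | hm
  · have h1 := congrArg (fun f : Module.End (ZMod p) (ℕ →₀ ZMod p) => f v) (hz2 m hm)
    simp only [Module.End.mul_apply, xO_apply] at h1
    rw [projE_single] at h1
    have h2 := Finsupp.single_eq_zero.1 h1.symm
    simpa using h2
  · have h1 := congrArg (fun f : Module.End (ZMod p) (ℕ →₀ ZMod p) => f v) hz1
    simp only [Module.End.mul_apply] at h1
    have h2 := congrArg (fun y : ℕ →₀ ZMod p => y m) h1
    change (projE p N (z v)) m = (z v) m at h2
    rw [projE_apply, if_neg (by omega)] at h2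
    simpa using h2.symm

/-- Every Hausdorff locally compact ring topology on the ring of finite-image
endomorphisms of a countable elementary abelian `p`-group is discrete. -/
theorem finRangeEnd_locallyCompact_discrete (p : ℕ) [Fact p.Prime]
    (t : TopologicalSpace (finRangeEndSubring p))
    (htr : @IsTopologicalRing (finRangeEndSubring p) t _)
    (ht2 : @T2Space (finRangeEndSubring p) t)
    (hlc : @LocallyCompactSpace (finRangeEndSubring p) t) :
    @DiscreteTopology (finRangeEndSubring p) t := by
  refine abstractKey (fun N => ⟨projE p N, projE_mem N⟩)
    (fun N m => ⟨xO p N m, xO_mem N m⟩) ?_ ?_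
  · intro z
    obtain ⟨N, hN⟩ := exists_projE_fix z.1 z.2
    exact ⟨N, Subtype.ext hN⟩
  · intro N z hz1 hz2
    refine Subtype.ext (end_eq_zero N z.1 (congrArg Subtype.val hz1) fun m hm => ?_)
    exact congrArg Subtype.val (hz2 m hm)
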